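/- For the 2D problem minimizing f(x₁,x₂) = (x₁² + x₂²)/2 with linear constraint, the curve defined implicitly by x₂ + √(x₁² + x₂²) = 2x̄₂ |x₁/x₁⁰|^{1-ζ} is an integral curve of the vector field s_ζ(x₁,x₂) = (-1/√(x₁²+x₂²)) (x₁, x₂ - ζ√(x₁²+x₂²)), for x₁ ≠ 0 in the region x₁²+x₂² > 0. -/

import Mathlib

lemma my_hasDerivAt_abs_rpow (x α : ℝ) (hx : x ≠ 0) :
    HasDerivAt (fun y : ℝ => |y| ^ α) (α * |x| ^ α / x) x := by
  rcases hx.lt_or_gt with h | h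
  · have h1 : HasDerivAt (fun y : ℝ => (-y) ^ α) (α * (-x) ^ (α - 1) * (-1)) x :=
      (Real.hasDerivAt_rpow_const (p := α) (Or.inl (neg_ne_zero.mpr hx))).comp x
        (hasDerivAt_neg x)
    have he : (fun y : ℝ => |y| ^ α) =ᶠ[nhds x] fun y => (-y) ^ α := by
      filter_upwards [eventually_lt_nhds h] with y hy
      rw [abs_of_neg hy]
    have h2 := h1.congr_of_eventuallyEq he
    refine h2.congr_deriv ?_
    rw [abs_of_neg h, Real.rpow_sub_one (neg_ne_zero.mpr hx)]
    field_simp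
  · have h1 : HasDerivAt (fun y : ℝ => y ^ α) (α * x ^ (α - 1)) x :=
      Real.hasDerivAt_rpow_const (Or.inl hx)
    have he : (fun y : ℝ => |y| ^ α) =ᶠ[nhds x] fun y => y ^ α := by
      filter_upwards [eventually_gt_nhds h] with y hy
      rw [abs_of_pos hy]
    have h2 := h1.congr_of_eventuallyEq he
    refine h2.congr_deriv ?_
    rw [abs_of_pos h, Real.rpow_sub_one hx]
    field_simp

theorem integral_curve_2d_example (ζ : ℝ) (hζ : ζ ∈ Set.Ico (0 : ℝ) 1)
    (x10 xb2 : ℝ) (hx10 : x10 ≠ 0) (hxb2 : 0 < xb2) :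
    let F : ℝ × ℝ → ℝ := fun p =>
      p.2 + Real.sqrt (p.1 ^ 2 + p.2 ^ 2) - 2 * xb2 * |p.1 / x10| ^ (1 - ζ)
    ∀ x₁ x₂ : ℝ, x₁ ≠ 0 → 0 < x₁ ^ 2 + x₂ ^ 2 → F (x₁, x₂) = 0 →
      (fderiv ℝ F (x₁, x₂))
        ((-(Real.sqrt (x₁ ^ 2 + x₂ ^ 2))⁻¹ * x₁,
          -(Real.sqrt (x₁ ^ 2 + x₂ ^ 2))⁻¹ *
            (x₂ - ζ * Real.sqrt (x₁ ^ 2 + x₂ ^ 2)))) = 0 := by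
  intro F x₁ x₂ hx1 hpos hF
  set r := Real.sqrt (x₁ ^ 2 + x₂ ^ 2) with hrdef
  have hr : 0 < r := Real.sqrt_pos.mpr hpos
  have hr2 : r ^ 2 = x₁ ^ 2 + x₂ ^ 2 := Real.sq_sqrt hpos.le
  set α : ℝ := 1 - ζ with hα
  set G : ℝ := |x₁ / x10| ^ α with hGdef
  -- derivative of the sqrt part
  have hq : HasFDerivAt (fun p : ℝ × ℝ => p.1 ^ 2 + p.2 ^ 2)
      ((2 * x₁) • ContinuousLinearMap.fst ℝ ℝ ℝ
        + (2 * x₂) • ContinuousLinearMap.snd ℝ ℝ ℝ) (x₁, x₂) := by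
    have h1 := (hasFDerivAt_fst (𝕜 := ℝ) (p := (x₁, x₂))).mul
      (hasFDerivAt_fst (𝕜 := ℝ) (p := (x₁, x₂)))
    have h2 := (hasFDerivAt_snd (𝕜 := ℝ) (p := (x₁, x₂))).mul
      (hasFDerivAt_snd (𝕜 := ℝ) (p := (x₁, x₂)))
    have h3 := h1.add h2
    simp only [pow_two]
    refine h3.congr_fderiv ?_
    rw [two_mul, two_mul, add_smul, add_smul]
  have hsq : HasDerivAt Real.sqrt (1 / (2 * r)) (x₁ ^ 2 + x₂ ^ 2) := by
    simpa [hrdef] using Real.hasDerivAt_sqrt (ne_of_gt hpos)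
  have h2 : HasFDerivAt (fun p : ℝ × ℝ => Real.sqrt (p.1 ^ 2 + p.2 ^ 2))
      ((1 / (2 * r)) • ((2 * x₁) • ContinuousLinearMap.fst ℝ ℝ ℝ
        + (2 * x₂) • ContinuousLinearMap.snd ℝ ℝ ℝ)) (x₁, x₂) :=
    hsq.comp_hasFDerivAt (x₁, x₂) hq
  -- derivative of the rpow part
  have hdiv : HasDerivAt (fun y : ℝ => y / x10) (1 / x10) x₁ := by
    simpa using (hasDerivAt_id x₁).div_const x10
  have habs : HasDerivAt (fun y : ℝ => |y / x10| ^ α)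
      (α * G / x₁) x₁ := by
    have h := (my_hasDerivAt_abs_rpow (x₁ / x10) α
      (div_ne_zero hx1 hx10)).comp x₁ hdiv
    refine h.congr_deriv ?_
    rw [hGdef]
    field_simp
  have h3 : HasFDerivAt (fun p : ℝ × ℝ => 2 * xb2 * |p.1 / x10| ^ α)
      ((2 * xb2 * (α * G / x₁)) • ContinuousLinearMap.fst ℝ ℝ ℝ) (x₁, x₂) := by
    have h := ((habs.const_mul (2 * xb2)).comp_hasFDerivAt (x₁, x₂)
      (hasFDerivAt_fst (𝕜 := ℝ) (p := (x₁, x₂))))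
    exact h
  have hFd : HasFDerivAt F
      (ContinuousLinearMap.snd ℝ ℝ ℝ
        + (1 / (2 * r)) • ((2 * x₁) • ContinuousLinearMap.fst ℝ ℝ ℝ
          + (2 * x₂) • ContinuousLinearMap.snd ℝ ℝ ℝ)
        - (2 * xb2 * (α * G / x₁)) • ContinuousLinearMap.fst ℝ ℝ ℝ) (x₁, x₂) :=
    ((hasFDerivAt_snd (𝕜 := ℝ) (p := (x₁, x₂))).add h2).sub h3
  rw [hFd.fderiv]
  have hG : 2 * xb2 * G = x₂ + r := by
    have : x₂ + r - 2 * xb2 * G = 0 := hF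
    linarith
  simp only [ContinuousLinearMap.sub_apply, ContinuousLinearMap.add_apply,
    ContinuousLinearMap.smul_apply, ContinuousLinearMap.coe_fst',
    ContinuousLinearMap.coe_snd', smul_eq_mul]
  have key : 2 * xb2 * (α * G / x₁) * x₁ = α * (x₂ + r) := by
    rw [← hG]; field_simp
  rw [show 2 * xb2 * (α * G / x₁) * (-r⁻¹ * x₁) = -r⁻¹ * (α * (x₂ + r)) from by
    rw [← key]; ring, hα]
  field_simp
  linear_combination hr2
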